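/- Let t_0 be an index such that P_i(T_i > θ^{(t_0)}) < 1/2. Then for every t ≥ t_0, with probability at least 1 − α the following hold simultaneously: (1 − p̂^{(k)}) ∈ [(1−ε)(1 − P_i(T_i > θ^{(k)})), (1+ε)(1 − P_i(T_i > θ^{(k)}))] for all k = t_0, …, t, and T̂_i^{(k)} ∈ [(1−ε)·E_i[min(T_i, θ^{(k)})], (1+ε)·E_i[min(T_i, θ^{(k)})]] for all k = 1, …, t. -/

import Mathlib

open MeasureTheory ProbabilityTheory Finset Set
open scoped ENNReal NNReal Classical

namespace LocalStationary

noncomputable section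

/-- First return time (≥ 1) of a trajectory `f` to the state `i`, valued in `ℕ∞`
(it equals `⊤` if the trajectory never returns to `i`). -/
def hit {S : Type*} (i : S) (f : ℕ → S) : ℕ∞ :=
  sInf {n : ℕ∞ | ∃ m : ℕ, n = m ∧ 1 ≤ m ∧ f m = i}

/-- Truncated return time `min(T_i, θ)` as a natural number. -/
def truncHit {S : Type*} (i : S) (θ : ℕ) (f : ℕ → S) : ℕ :=
  (min (hit i f) (θ : ℕ∞)).toNat

/-- Number of visits to `j` among the first `min(T_i, θ)` steps of the trajectory. -/
def visits {S : Type*} (i j : S) (θ : ℕ) (f : ℕ → S) : ℕ :=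
  ((Finset.Icc 1 (truncHit i θ f)).filter fun s => f s = j).card

/-- A discrete-time time-homogeneous Markov chain on a state space `S`, described by
the laws `μ x` of its trajectories started at each state `x`, together with its
transition matrix `trans`. -/
structure Chain (S : Type*) [MeasurableSpace S] where
  μ : S → Measure (ℕ → S)
  isProb : ∀ x, IsProbabilityMeasure (μ x)
  start : ∀ x, μ x {f | f 0 = x} = 1
  trans : S → S → ℝ≥0∞
  trans_sum : ∀ x, ∑' y, trans x y = 1
  markov : ∀ x (n : ℕ) (s : ℕ → S),
    μ x {f | ∀ k ≤ n + 1, f k = s k} =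
      μ x {f | ∀ k ≤ n, f k = s k} * trans (s n) (s (n + 1))

namespace Chain

variable {S : Type*} [MeasurableSpace S]

/-- Irreducibility: from every state one can reach every other state. -/
def Irreducible (C : Chain S) : Prop :=
  ∀ x y : S, ∃ n : ℕ, 0 < C.μ x {f | f n = y}

/-- Positive recurrence: the return time to each state is almost surely finite and
has finite expectation. -/
def PositiveRecurrent (C : Chain S) : Prop :=
  ∀ x : S, C.μ x {f | hit x f = ⊤} = 0 ∧
    Integrable (fun f => ((hit x f).toNat : ℝ)) (C.μ x)

/-- Aperiodicity: for each state, the only common divisor of the possible return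
times is `1`. -/
def Aperiodic (C : Chain S) : Prop :=
  ∀ x : S, ∀ d : ℕ, (∀ n : ℕ, 1 ≤ n → 0 < C.μ x {f | f n = x} → d ∣ n) → d ∣ 1

/-- `E_x[T_i]`, the expected hitting time of `i` starting from `x`. -/
def ERet (C : Chain S) (x i : S) : ℝ :=
  ∫ f, ((hit i f).toNat : ℝ) ∂ C.μ x

/-- The stationary probability `π_i = 1 / E_i[T_i]`. -/
def statPi (C : Chain S) (i : S) : ℝ := (C.ERet i i)⁻¹

/-- The truncated mean `E_i[min(T_i, θ)]`. -/
def EThat (C : Chain S) (i : S) (θ : ℕ) : ℝ :=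
  ∫ f, (truncHit i θ f : ℝ) ∂ C.μ i

/-- `E_i[F̂_j] = E_i[Σ_{s=1}^{min(T_i,θ)} 1{X_s = j}]`. -/
def EVisits (C : Chain S) (i j : S) (θ : ℕ) : ℝ :=
  ∫ f, (visits i j θ f : ℝ) ∂ C.μ i

/-- `P_i(T_i > k)`, as a real number. -/
def tailP (C : Chain S) (i : S) (k : ℕ) : ℝ :=
  (C.μ i {f | (k : ℕ∞) < hit i f}).toReal

/-- The maximal hitting time `H_i = max_x E_x[T_i]`. -/
def maxHit (C : Chain S) (i : S) : ℝ := ⨆ x : S, C.ERet x i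

/-- Entry `Z_{jk} = Σ_{t=0}^∞ (P^{(t)}_{jk} − π_k)` of the fundamental matrix. -/
def Zfun (C : Chain S) (j k : S) : ℝ :=
  ∑' t : ℕ, ((C.μ j {f | f t = k}).toReal - C.statPi k)

/-- `Z_max(i) = max_k |Z_{ki}|`. -/
def Zmax (C : Chain S) (i : S) : ℝ := ⨆ k : S, |C.Zfun k i|

end Chain


/-- The randomness of the local algorithm with anchor node `i` and parameters `ε`, `α`,
run on the chain `C`: a probability space carrying, for every iteration `t` and sample
index `k`, an independent sample trajectory `path t k` of the chain started at `i`,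
together with the sample numbers `N^{(t)}`, empirical truncated return times `T̂^{(t)}`
and truncated fractions `p̂^{(t)}`, with `θ^{(t)} = 2^t`. -/
structure Algo {S : Type*} [MeasurableSpace S] (C : Chain S) (i : S) (ε α : ℝ)
    (Ω : Type*) [MeasurableSpace Ω] where
  vol : Measure Ω
  isProb : IsProbabilityMeasure vol
  path : ℕ → ℕ → Ω → (ℕ → S)
  meas_path : ∀ t k, Measurable (path t k)
  law_path : ∀ t k, vol.map (path t k) = C.μ i
  indep_path : iIndepFun (fun p : ℕ × ℕ => path p.1 p.2) vol
  Nsamp : ℕ → Ω → ℕ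
  That : ℕ → Ω → ℝ
  phat : ℕ → Ω → ℝ
  hThat : ∀ t ω, That t ω =
    (Nsamp t ω : ℝ)⁻¹ * ∑ k ∈ Finset.range (Nsamp t ω), (truncHit i (2 ^ t) (path t k ω) : ℝ)
  hphat : ∀ t ω, phat t ω = (Nsamp t ω : ℝ)⁻¹ *
    ∑ k ∈ Finset.range (Nsamp t ω),
      (if ((2 ^ t : ℕ) : ℕ∞) < hit i (path t k ω) then (1 : ℝ) else 0)
  hN1 : ∀ ω, Nsamp 1 ω = ⌈6 * (1 + ε) * Real.log (8 / α) / ε ^ 2⌉₊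
  hNsucc : ∀ t ω, 1 ≤ t → Nsamp (t + 1) ω =
    ⌈3 * (1 + ε) * (2 ^ (t + 1) : ℝ) * Real.log (4 * (2 ^ (t + 1) : ℝ) / α) /
      (That t ω * ε ^ 2)⌉₊

namespace Algo

variable {S : Type*} [MeasurableSpace S] {C : Chain S} {i : S} {ε α : ℝ}
  {Ω : Type*} [MeasurableSpace Ω]

/-- The estimate `F̂_j^{(t)}` of the visit frequency to an observer node `j`. -/
def Fhat (A : Algo C i ε α Ω) (j : S) (t : ℕ) (ω : Ω) : ℝ :=
  (A.Nsamp t ω : ℝ)⁻¹ *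
    ∑ k ∈ Finset.range (A.Nsamp t ω), (visits i j (2 ^ t) (A.path t k ω) : ℝ)

/-- Termination condition at iteration `t`: (a) `π̂^{(t)} < Δ/(1+ε)`, or
(b) `p̂^{(t)} π̂^{(t)} < εΔ`, where `π̂^{(t)} = 1/T̂^{(t)}`. -/
def stops (A : Algo C i ε α Ω) (Δ : ℝ) (t : ℕ) (ω : Ω) : Prop :=
  (A.That t ω)⁻¹ < Δ / (1 + ε) ∨ A.phat t ω * (A.That t ω)⁻¹ < ε * Δ

/-- The terminal iteration `t_max` of the algorithm. -/
def tmax (A : Algo C i ε α Ω) (Δ : ℝ) (ω : Ω) : ℕ :=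
  sInf {t : ℕ | 1 ≤ t ∧ A.stops Δ t ω}

end Algo



/-! ### Auxiliary lemmas for statement2 -/

section AuxReal
open Real

lemma aux_exp_cubic_bound {u : ℝ} (h0 : 0 ≤ u) (h1 : u ≤ 1) :
    Real.exp u ≤ 1 + u + u ^ 2 / 2 + 2 * u ^ 3 / 9 := by
  have hb := Real.exp_bound (x := u) (by rw [abs_of_nonneg h0]; exact h1) (n := 3) (by norm_num)
  have h2 : ∑ i ∈ Finset.range 3, u ^ i / (Nat.factorial i : ℝ) = 1 + u + u ^ 2 / 2 := by
    simp [Finset.sum_range_succ, Nat.factorial]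
  rw [h2, abs_of_nonneg h0] at hb
  have : |Real.exp u - (1 + u + u ^ 2 / 2)| ≤ u ^ 3 * (4 / 18 : ℝ) := by
    convert hb using 2
    norm_num [Nat.factorial]
  have h3 := (abs_le.mp this).2
  nlinarith

lemma aux_exp_neg_quad_bound {u : ℝ} (h0 : 0 ≤ u) :
    Real.exp (-u) ≤ 1 - u + u ^ 2 / 2 := by
  have h := Real.quadratic_le_exp_of_nonneg h0
  have hpos : (0:ℝ) < 1 + u + u ^ 2 / 2 := by nlinarith
  rw [Real.exp_neg]
  have h1 : (Real.exp u)⁻¹ ≤ (1 + u + u ^ 2 / 2)⁻¹ := inv_anti₀ hpos h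
  refine h1.trans ?_
  rw [inv_le_iff_one_le_mul₀ hpos]
  nlinarith

lemma aux_measurable_switch {Ω : Type*} {m : MeasurableSpace Ω} {γ : Type*} [MeasurableSpace γ]
    {N : Ω → ℕ} {F : ℕ → Ω → γ} (hN : Measurable[m] N) (hF : ∀ n, Measurable[m] (F n)) :
    Measurable[m] (fun ω => F (N ω) ω) := by
  intro s hs
  have h : (fun ω => F (N ω) ω) ⁻¹' s = ⋃ n, (N ⁻¹' {n} ∩ (F n) ⁻¹' s) := by
    ext ω
    simp only [Set.mem_preimage, Set.mem_iUnion, Set.mem_inter_iff, Set.mem_singleton_iff]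
    exact ⟨fun h => ⟨N ω, rfl, h⟩, fun ⟨n, hn, h⟩ => hn ▸ h⟩
  rw [h]
  exact MeasurableSet.iUnion fun n => (hN (measurableSet_singleton n)).inter (hF n hs)

lemma aux_measurable_natCeil : Measurable (fun x : ℝ => ⌈x⌉₊) := by
  apply measurable_to_countable'
  intro n
  rcases Nat.eq_zero_or_pos n with rfl | hn
  · have : (fun x : ℝ => ⌈x⌉₊) ⁻¹' {0} = Set.Iic 0 := by
      ext x; simp [Nat.ceil_eq_zero]
    rw [this]; exact measurableSet_Iic
  · have : (fun x : ℝ => ⌈x⌉₊) ⁻¹' {n} = Set.Ioc (((n - 1 : ℕ) : ℝ)) n := by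
      ext x
      simp only [Set.mem_preimage, Set.mem_singleton_iff, Set.mem_Ioc]
      rw [Nat.ceil_eq_iff hn.ne']
    rw [this]; exact measurableSet_Ioc

lemma aux_integrable_of_bounded {α : Type*} [MeasurableSpace α] (ν : Measure α)
    [IsProbabilityMeasure ν] {g : α → ℝ} (hg : Measurable g) (b : ℝ)
    (hb : ∀ x, ‖g x‖ ≤ b) : Integrable g ν :=
  (integrable_const b).mono' hg.aestronglyMeasurable (ae_of_all _ hb)

lemma aux_mgf_chord {α : Type*} [MeasurableSpace α] (ν : Measure α) [IsProbabilityMeasure ν]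
    {g : α → ℝ} (hg : Measurable g) {θ : ℝ} (hθ : 0 < θ)
    (hg0 : ∀ x, 0 ≤ g x) (hgθ : ∀ x, g x ≤ θ) (lam : ℝ) :
    mgf g ν lam ≤ Real.exp ((Real.exp (lam * θ) - 1) * (∫ x, g x ∂ν) / θ) := by
  have hgint : Integrable g ν := aux_integrable_of_bounded ν hg θ
    (fun x => by rw [Real.norm_eq_abs, abs_of_nonneg (hg0 x)]; exact hgθ x)
  have hpt : ∀ x, Real.exp (lam * g x) ≤ 1 + (Real.exp (lam * θ) - 1) * (g x / θ) := by
    intro x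
    have ha0 : 0 ≤ g x / θ := div_nonneg (hg0 x) hθ.le
    have ha1 : g x / θ ≤ 1 := (div_le_one hθ).mpr (hgθ x)
    have hcx := convexOn_exp.2 (Set.mem_univ (0:ℝ)) (Set.mem_univ (lam * θ))
      (by linarith : (0:ℝ) ≤ 1 - g x / θ) ha0 (by ring)
    simp only [smul_eq_mul, mul_zero, zero_add, Real.exp_zero] at hcx
    have harg : g x / θ * (lam * θ) = lam * g x := by field_simp
    rw [harg] at hcx
    linarith [hcx]
  have hint2 : Integrable (fun x => 1 + (Real.exp (lam * θ) - 1) * (g x / θ)) ν :=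
    (integrable_const 1).add ((hgint.div_const θ).const_mul _)
  have h1 : mgf g ν lam ≤ ∫ x, (1 + (Real.exp (lam * θ) - 1) * (g x / θ)) ∂ν := by
    refine integral_mono ?_ hint2 hpt
    exact aux_integrable_of_bounded ν ((hg.const_mul lam).exp) (Real.exp (|lam| * θ)) (fun x => by
      rw [Real.norm_eq_abs, abs_of_nonneg (Real.exp_nonneg _)]
      apply Real.exp_le_exp.mpr
      rcases le_or_gt 0 lam with h | h
      · calc lam * g x ≤ lam * θ := by nlinarith [hgθ x]
          _ ≤ |lam| * θ := by rw [abs_of_nonneg h]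
      · calc lam * g x ≤ 0 := mul_nonpos_of_nonpos_of_nonneg h.le (hg0 x)
          _ ≤ |lam| * θ := mul_nonneg (abs_nonneg _) hθ.le)
  have h2 : ∫ x, (1 + (Real.exp (lam * θ) - 1) * (g x / θ)) ∂ν
      = 1 + (Real.exp (lam * θ) - 1) * (∫ x, g x ∂ν) / θ := by
    rw [integral_add (integrable_const 1) ((hgint.div_const θ).const_mul _)]
    simp only [integral_const, Measure.real, measure_univ, ENNReal.toReal_one, smul_eq_mul, one_mul]
    rw [integral_const_mul, integral_div]
    ring
  rw [h2] at h1
  refine h1.trans ?_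
  calc 1 + (Real.exp (lam * θ) - 1) * (∫ x, g x ∂ν) / θ
      = (Real.exp (lam * θ) - 1) * (∫ x, g x ∂ν) / θ + 1 := by ring
    _ ≤ Real.exp ((Real.exp (lam * θ) - 1) * (∫ x, g x ∂ν) / θ) := Real.add_one_le_exp _

end AuxReal

section AuxTraj
set_option linter.unusedSectionVars false
variable {S : Type*} [MeasurableSpace S] [MeasurableSingletonClass S]

lemma one_le_hit (i : S) (f : ℕ → S) : 1 ≤ hit i f := by
  refine le_sInf ?_
  rintro n ⟨m, rfl, hm, -⟩
  exact_mod_cast hm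

lemma lt_hit_iff (i : S) (f : ℕ → S) (θ : ℕ) :
    (θ : ℕ∞) < hit i f ↔ ∀ m : ℕ, 1 ≤ m → m ≤ θ → f m ≠ i := by
  rw [hit, show ((θ : ℕ∞) < sInf {n : ℕ∞ | ∃ m : ℕ, n = m ∧ 1 ≤ m ∧ f m = i}
      ↔ (θ : ℕ∞) + 1 ≤ sInf {n : ℕ∞ | ∃ m : ℕ, n = m ∧ 1 ≤ m ∧ f m = i}) from
    (ENat.add_one_le_iff (by simp)).symm, le_sInf_iff]
  constructor
  · intro h m hm1 hmθ hfm
    have := h (m : ℕ∞) ⟨m, rfl, hm1, hfm⟩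
    have h2 : (θ : ℕ∞) < (m : ℕ∞) := lt_of_lt_of_le (ENat.lt_add_one_iff (by simp) |>.mpr le_rfl) this
    exact absurd (by exact_mod_cast h2) (not_lt.mpr hmθ)
  · rintro h n ⟨m, rfl, hm1, hfm⟩
    have : θ < m := by
      by_contra hc
      exact h m hm1 (not_lt.mp hc) hfm
    rw [ENat.add_one_le_iff (by simp)]
    exact_mod_cast this

lemma measurableSet_lt_hit (i : S) (θ : ℕ) :
    MeasurableSet {f : ℕ → S | (θ : ℕ∞) < hit i f} := by
  have : {f : ℕ → S | (θ : ℕ∞) < hit i f}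
      = ⋂ m ∈ Finset.Icc 1 θ, {f : ℕ → S | f m ≠ i} := by
    ext f
    simp only [Set.mem_setOf_eq, Set.mem_iInter, Finset.mem_Icc, lt_hit_iff]
    exact ⟨fun h m hm => h m hm.1 hm.2, fun h m h1 h2 => h m ⟨h1, h2⟩⟩
  rw [this]
  refine MeasurableSet.biInter (Finset.countable_toSet _) fun m _ => ?_
  have hm : Measurable (fun f : ℕ → S => f m) := measurable_pi_apply m
  have : MeasurableSet {f : ℕ → S | f m = i} := hm (measurableSet_singleton i)
  exact this.compl

def indHit {S : Type*} (i : S) (θ : ℕ) (f : ℕ → S) : ℝ :=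
  if (θ : ℕ∞) < hit i f then 1 else 0

lemma measurable_indHit (i : S) (θ : ℕ) : Measurable (indHit i θ) := by
  unfold indHit
  exact Measurable.ite (measurableSet_lt_hit i θ) measurable_const measurable_const

lemma truncHit_eq_sum (i : S) (θ : ℕ) (f : ℕ → S) :
    (truncHit i θ f : ℝ) = ∑ s ∈ Finset.range θ, indHit i s f := by
  classical
  rcases le_or_gt (θ : ℕ∞) (hit i f) with h | h
  · have h1 : truncHit i θ f = θ := by
      rw [truncHit, min_eq_right h]; simp
    rw [h1]
    have : ∀ s ∈ Finset.range θ, indHit i s f = 1 := by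
      intro s hs
      rw [indHit, if_pos]
      exact lt_of_lt_of_le (by exact_mod_cast Finset.mem_range.mp hs) h
    rw [Finset.sum_congr rfl this]
    simp
  · have hne : hit i f ≠ ⊤ := (h.trans_le le_top).ne  -- hit < θ ≤ ⊤... θ is finite so hit < ⊤
    -- hit i f is finite
    obtain ⟨m, hm⟩ : ∃ m : ℕ, hit i f = (m : ℕ∞) := ⟨(hit i f).toNat, by simp [ENat.coe_toNat hne]⟩
    have hmθ : m < θ := by exact_mod_cast hm ▸ h
    have h1 : truncHit i θ f = m := by
      rw [truncHit, min_eq_left (le_of_lt h), hm]; simp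
    rw [h1]
    have : ∀ s ∈ Finset.range θ, indHit i s f = if s < m then (1:ℝ) else 0 := by
      intro s _
      rw [indHit, hm]
      by_cases hsm : s < m
      · rw [if_pos (by exact_mod_cast hsm), if_pos hsm]
      · rw [if_neg (by exact_mod_cast hsm), if_neg hsm]
    rw [Finset.sum_congr rfl this, Finset.sum_ite, Finset.sum_const_zero, add_zero,
      Finset.sum_const]
    have : Finset.filter (fun s => s < m) (Finset.range θ) = Finset.range m := by
      ext s
      simp only [Finset.mem_filter, Finset.mem_range]
      exact ⟨fun hh => hh.2, fun hh => ⟨hh.trans hmθ, hh⟩⟩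
    simp [this]

lemma measurable_truncHitR (i : S) (θ : ℕ) :
    Measurable (fun f : ℕ → S => (truncHit i θ f : ℝ)) := by
  have : (fun f : ℕ → S => (truncHit i θ f : ℝ))
      = fun f => ∑ s ∈ Finset.range θ, indHit i s f := by
    ext f; exact truncHit_eq_sum i θ f
  rw [this]
  exact Finset.measurable_sum _ fun s _ => measurable_indHit i s

lemma truncHit_bounds (i : S) (θ : ℕ) (hθ : 1 ≤ θ) (f : ℕ → S) :
    1 ≤ truncHit i θ f ∧ truncHit i θ f ≤ θ := by
  constructor
  · rw [truncHit]
    have h1 : 1 ≤ min (hit i f) (θ : ℕ∞) := le_min (one_le_hit i f) (by exact_mod_cast hθ)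
    have h2 : min (hit i f) (θ : ℕ∞) ≤ (θ : ℕ∞) := min_le_right _ _
    have hfin : min (hit i f) (θ : ℕ∞) ≠ ⊤ := (h2.trans_lt (by simp : (θ:ℕ∞) < ⊤)).ne
    have := ENat.coe_toNat hfin
    rw [← this] at h1
    exact_mod_cast h1
  · rw [truncHit]
    have h2 : min (hit i f) (θ : ℕ∞) ≤ (θ : ℕ∞) := min_le_right _ _
    exact_mod_cast ENat.toNat_le_of_le_coe h2

lemma truncHit_mono (i : S) {θ₁ θ₂ : ℕ} (h : θ₁ ≤ θ₂) (f : ℕ → S) :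
    truncHit i θ₁ f ≤ truncHit i θ₂ f := by
  rw [truncHit, truncHit]
  have h2 : min (hit i f) (θ₁ : ℕ∞) ≤ min (hit i f) (θ₂ : ℕ∞) :=
    min_le_min le_rfl (by exact_mod_cast h)
  have hfin : min (hit i f) (θ₂ : ℕ∞) ≤ (θ₂ : ℕ∞) := min_le_right _ _
  exact ENat.toNat_le_toNat h2 (hfin.trans_lt (by simp)).ne


end AuxTraj

section AuxChain
set_option linter.unusedSectionVars false
variable {S : Type*} [MeasurableSpace S] [MeasurableSingletonClass S]

/-- truncated return time, as a real-valued function on trajectories -/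
def gTrunc (i : S) (θ : ℕ) : (ℕ → S) → ℝ := fun f => (truncHit i θ f : ℝ)

/-- indicator of return within time `θ`, as a real-valued function on trajectories -/
def gQ (i : S) (θ : ℕ) : (ℕ → S) → ℝ := fun f => 1 - indHit i θ f

lemma measurable_gTrunc (i : S) (θ : ℕ) : Measurable (gTrunc i θ) := measurable_truncHitR i θ

lemma measurable_gQ (i : S) (θ : ℕ) : Measurable (gQ i θ) :=
  measurable_const.sub (measurable_indHit i θ)

lemma gTrunc_nonneg (i : S) (θ : ℕ) (f : ℕ → S) : 0 ≤ gTrunc i θ f := by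
  simp [gTrunc]

lemma gTrunc_le (i : S) (θ : ℕ) (f : ℕ → S) : gTrunc i θ f ≤ θ := by
  rw [gTrunc]
  have h2 : min (hit i f) (θ : ℕ∞) ≤ (θ : ℕ∞) := min_le_right _ _
  exact_mod_cast ENat.toNat_le_of_le_coe h2

lemma one_le_gTrunc (i : S) {θ : ℕ} (hθ : 1 ≤ θ) (f : ℕ → S) : 1 ≤ gTrunc i θ f := by
  rw [gTrunc]
  exact_mod_cast (truncHit_bounds i θ hθ f).1

lemma gQ_nonneg (i : S) (θ : ℕ) (f : ℕ → S) : 0 ≤ gQ i θ f := by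
  rw [gQ, indHit]; split <;> norm_num

lemma gQ_le_one (i : S) (θ : ℕ) (f : ℕ → S) : gQ i θ f ≤ 1 := by
  rw [gQ, indHit]; split <;> norm_num

variable (C : Chain S) (i : S)

lemma EThat_eq_integral (θ : ℕ) : C.EThat i θ = ∫ f, gTrunc i θ f ∂ C.μ i := rfl

lemma integrable_gTrunc (θ : ℕ) : Integrable (gTrunc i θ) (C.μ i) := by
  haveI := C.isProb i
  exact aux_integrable_of_bounded _ (measurable_gTrunc i θ) θ (fun f => by
    rw [Real.norm_eq_abs, abs_of_nonneg (gTrunc_nonneg i θ f)]; exact gTrunc_le i θ f)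

lemma integrable_gQ (θ : ℕ) : Integrable (gQ i θ) (C.μ i) := by
  haveI := C.isProb i
  exact aux_integrable_of_bounded _ (measurable_gQ i θ) 1 (fun f => by
    rw [Real.norm_eq_abs, abs_of_nonneg (gQ_nonneg i θ f)]; exact gQ_le_one i θ f)

lemma one_le_EThat {θ : ℕ} (hθ : 1 ≤ θ) : 1 ≤ C.EThat i θ := by
  haveI := C.isProb i
  rw [EThat_eq_integral]
  calc (1:ℝ) = ∫ _, (1:ℝ) ∂ C.μ i := by simp
    _ ≤ ∫ f, gTrunc i θ f ∂ C.μ i :=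
      integral_mono (integrable_const 1) (integrable_gTrunc C i θ) (one_le_gTrunc i hθ)

lemma EThat_le_theta (θ : ℕ) : C.EThat i θ ≤ θ := by
  haveI := C.isProb i
  rw [EThat_eq_integral]
  calc ∫ f, gTrunc i θ f ∂ C.μ i ≤ ∫ _, (θ:ℝ) ∂ C.μ i :=
      integral_mono (integrable_gTrunc C i θ) (integrable_const _) (gTrunc_le i θ)
    _ = θ := by simp

lemma EThat_mono {θ₁ θ₂ : ℕ} (h : θ₁ ≤ θ₂) : C.EThat i θ₁ ≤ C.EThat i θ₂ := by
  haveI := C.isProb i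
  rw [EThat_eq_integral, EThat_eq_integral]
  refine integral_mono (integrable_gTrunc C i θ₁) (integrable_gTrunc C i θ₂) (fun f => ?_)
  show (truncHit i θ₁ f : ℝ) ≤ (truncHit i θ₂ f : ℝ)
  exact_mod_cast truncHit_mono i h f

lemma tailP_eq_integral (θ : ℕ) : C.tailP i θ = ∫ f, indHit i θ f ∂ C.μ i := by
  haveI := C.isProb i
  have h : (fun f => indHit i θ f)
      = Set.indicator {f : ℕ → S | (θ : ℕ∞) < hit i f} (fun _ => (1:ℝ)) := by
    funext f
    rw [indHit, Set.indicator_apply]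
    rfl
  rw [Chain.tailP, h]
  exact (integral_indicator_one (measurableSet_lt_hit i θ)).symm

lemma integral_gQ_eq (θ : ℕ) : ∫ f, gQ i θ f ∂ C.μ i = 1 - C.tailP i θ := by
  haveI := C.isProb i
  have : ∫ f, gQ i θ f ∂ C.μ i = ∫ f, (1:ℝ) ∂ C.μ i - ∫ f, indHit i θ f ∂ C.μ i := by
    rw [← integral_sub (integrable_const 1)]
    · rfl
    · exact aux_integrable_of_bounded _ (measurable_indHit i θ) 1 (fun f => by
        rw [Real.norm_eq_abs, indHit]; split <;> norm_num)
  rw [this, tailP_eq_integral]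
  simp

lemma tailP_anti {θ₁ θ₂ : ℕ} (h : θ₁ ≤ θ₂) : C.tailP i θ₂ ≤ C.tailP i θ₁ := by
  haveI := C.isProb i
  rw [Chain.tailP, Chain.tailP]
  refine ENNReal.toReal_mono (measure_ne_top _ _) (measure_mono (fun f hf => ?_))
  have hf' : (θ₂ : ℕ∞) < hit i f := hf
  exact lt_of_le_of_lt (show (θ₁:ℕ∞) ≤ (θ₂:ℕ∞) by exact_mod_cast h) hf'

lemma tailP_nonneg (θ : ℕ) : 0 ≤ C.tailP i θ := ENNReal.toReal_nonneg

end AuxChain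

section AuxTails
set_option linter.unusedSectionVars false
set_option maxHeartbeats 1000000
variable {S : Type*} [MeasurableSpace S] [MeasurableSingletonClass S]
  {C : Chain S} {i : S} {ε α : ℝ} {Ω : Type*} [MeasurableSpace Ω]

namespace Algo

lemma sum_g_meas (A : Algo C i ε α Ω) {g : (ℕ → S) → ℝ} (hg : Measurable g) (t n : ℕ) :
    Measurable (fun ω => ∑ j ∈ Finset.range n, g (A.path t j ω)) :=
  Finset.measurable_sum _ fun j _ => hg.comp (A.meas_path t j)

lemma integrable_exp_sum (A : Algo C i ε α Ω) {g : (ℕ → S) → ℝ} (hg : Measurable g)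
    {θR : ℝ} (hθ : 0 < θR) (hg0 : ∀ f, 0 ≤ g f) (hgθ : ∀ f, g f ≤ θR) (t n : ℕ) (lam : ℝ) :
    Integrable (fun ω => Real.exp (lam * ∑ j ∈ Finset.range n, g (A.path t j ω))) A.vol := by
  haveI := A.isProb
  refine aux_integrable_of_bounded _ (((A.sum_g_meas hg t n).const_mul lam).exp)
    (Real.exp (|lam| * (n * θR))) (fun ω => ?_)
  rw [Real.norm_eq_abs, abs_of_nonneg (Real.exp_nonneg _)]
  apply Real.exp_le_exp.mpr
  have hS0 : 0 ≤ ∑ j ∈ Finset.range n, g (A.path t j ω) :=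
    Finset.sum_nonneg fun j _ => hg0 _
  have hSθ : ∑ j ∈ Finset.range n, g (A.path t j ω) ≤ n * θR := by
    calc ∑ j ∈ Finset.range n, g (A.path t j ω) ≤ ∑ _j ∈ Finset.range n, θR :=
        Finset.sum_le_sum fun j _ => hgθ _
      _ = n * θR := by simp [mul_comm]
  rcases le_or_gt 0 lam with h | h
  · calc lam * ∑ j ∈ Finset.range n, g (A.path t j ω) ≤ lam * (n * θR) := by nlinarith
      _ ≤ |lam| * (n * θR) := by rw [abs_of_nonneg h]
  · calc lam * ∑ j ∈ Finset.range n, g (A.path t j ω) ≤ 0 :=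
        mul_nonpos_of_nonpos_of_nonneg h.le hS0
      _ ≤ |lam| * (n * θR) := by positivity

lemma mgf_sum_eq (A : Algo C i ε α Ω) {g : (ℕ → S) → ℝ} (hg : Measurable g) (t n : ℕ)
    (lam : ℝ) :
    mgf (fun ω => ∑ j ∈ Finset.range n, g (A.path t j ω)) A.vol lam
      = (mgf g (C.μ i) lam) ^ n := by
  haveI := A.isProb
  classical
  set X : ℕ × ℕ → Ω → ℝ := fun p ω => g (A.path p.1 p.2 ω) with hX
  have hind : iIndepFun X A.vol :=
    A.indep_path.comp (fun _ => g) (fun _ => hg)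
  have hXmeas : ∀ p : ℕ × ℕ, Measurable (X p) := fun p => hg.comp (A.meas_path p.1 p.2)
  have hfun : (fun ω => ∑ j ∈ Finset.range n, g (A.path t j ω))
      = ∑ p ∈ ({t} : Finset ℕ) ×ˢ Finset.range n, X p := by
    funext ω
    rw [Finset.sum_apply]
    rw [Finset.sum_product, Finset.sum_singleton]
  have hmgf_each : ∀ p : ℕ × ℕ, mgf (X p) A.vol lam = mgf g (C.μ i) lam := by
    intro p
    rw [mgf, mgf, ← A.law_path p.1 p.2,
      integral_map (A.meas_path p.1 p.2).aemeasurable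
        ((hg.const_mul lam).exp.aestronglyMeasurable)]
  rw [hfun, hind.mgf_sum hXmeas]
  rw [Finset.prod_congr rfl (fun p _ => hmgf_each p), Finset.prod_const]
  congr 1
  simp

lemma tail_up (A : Algo C i ε α Ω) (hε : ε ∈ Set.Ioo (0:ℝ) 1) {g : (ℕ → S) → ℝ}
    (hg : Measurable g) {θR : ℝ} (hθ : 0 < θR) (hg0 : ∀ f, 0 ≤ g f) (hgθ : ∀ f, g f ≤ θR)
    {m : ℝ} (hm : 0 < m) (hmdef : m = ∫ f, g f ∂ C.μ i) (t n : ℕ) :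
    (A.vol {ω | (1 + ε) * (n * m) ≤ ∑ j ∈ Finset.range n, g (A.path t j ω)}).toReal
      ≤ Real.exp (-(n * m * ε ^ 2 / (3 * θR))) := by
  haveI := A.isProb
  haveI := C.isProb i
  obtain ⟨hε0, hε1⟩ := hε
  set lam := 2 * ε / (3 * θR) with hlam
  have hlam0 : 0 ≤ lam := by positivity
  have h1 := measure_ge_le_exp_mul_mgf (μ := A.vol)
    (X := fun ω => ∑ j ∈ Finset.range n, g (A.path t j ω)) ((1 + ε) * (n * m)) hlam0
    (A.integrable_exp_sum hg hθ hg0 hgθ t n lam)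
  refine h1.trans ?_
  rw [A.mgf_sum_eq hg t n lam]
  have hlamθ : lam * θR = 2 * ε / 3 := by
    rw [hlam, div_mul_eq_mul_div, mul_div_mul_right _ _ hθ.ne']
  have hchord := aux_mgf_chord (C.μ i) hg hθ hg0 hgθ lam
  rw [← hmdef] at hchord
  set K := Real.exp (lam * θR) with hK
  have hKb : K ≤ 1 + 2 * ε / 3 + (2 * ε / 3) ^ 2 / 2 + 2 * (2 * ε / 3) ^ 3 / 9 := by
    rw [hK, hlamθ]
    exact aux_exp_cubic_bound (by positivity) (by linarith)
  have hpow : (mgf g (C.μ i) lam) ^ n ≤ Real.exp ((K - 1) * m / θR) ^ n :=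
    pow_le_pow_left₀ mgf_nonneg hchord n
  have hres : Real.exp (-lam * ((1 + ε) * (n * m))) * Real.exp ((K - 1) * m / θR) ^ n
      = Real.exp (-lam * ((1 + ε) * (n * m)) + n * ((K - 1) * m / θR)) := by
    rw [← Real.exp_nat_mul, ← Real.exp_add]
  calc Real.exp (-lam * ((1 + ε) * (n * m))) * (mgf g (C.μ i) lam) ^ n
      ≤ Real.exp (-lam * ((1 + ε) * (n * m))) * Real.exp ((K - 1) * m / θR) ^ n := by
        exact mul_le_mul_of_nonneg_left hpow (Real.exp_nonneg _)
    _ = Real.exp (-lam * ((1 + ε) * (n * m)) + n * ((K - 1) * m / θR)) := hres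
    _ ≤ Real.exp (-(n * m * ε ^ 2 / (3 * θR))) := by
        apply Real.exp_le_exp.mpr
        have hkey : K - 1 - (1 + ε) * (2 * ε / 3) ≤ -(ε ^ 2 / 3) := by
          nlinarith [hKb, sq_nonneg ε, pow_le_pow_left₀ hε0.le hε1.le 3,
            mul_pos hε0 hε0]
        have hid : -lam * ((1 + ε) * (n * m)) + n * ((K - 1) * m / θR)
            = (n * m / θR) * (K - 1 - (1 + ε) * (2 * ε / 3)) := by
          rw [hlam]; field_simp; ring
        rw [hid]
        have hnm : 0 ≤ n * m / θR := by positivity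
        calc (n * m / θR) * (K - 1 - (1 + ε) * (2 * ε / 3))
            ≤ (n * m / θR) * (-(ε ^ 2 / 3)) := mul_le_mul_of_nonneg_left hkey hnm
          _ = -(n * m * ε ^ 2 / (3 * θR)) := by ring

lemma tail_low (A : Algo C i ε α Ω) (hε : ε ∈ Set.Ioo (0:ℝ) 1) {g : (ℕ → S) → ℝ}
    (hg : Measurable g) {θR : ℝ} (hθ : 0 < θR) (hg0 : ∀ f, 0 ≤ g f) (hgθ : ∀ f, g f ≤ θR)
    {m : ℝ} (hm : 0 < m) (hmdef : m = ∫ f, g f ∂ C.μ i) (t n : ℕ) :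
    (A.vol {ω | ∑ j ∈ Finset.range n, g (A.path t j ω) ≤ (1 - ε) * (n * m)}).toReal
      ≤ Real.exp (-(n * m * ε ^ 2 / (3 * θR))) := by
  haveI := A.isProb
  haveI := C.isProb i
  obtain ⟨hε0, hε1⟩ := hε
  set lam := -(ε / θR) with hlam
  have hlam0 : lam ≤ 0 := neg_nonpos.mpr (by positivity)
  have h1 := measure_le_le_exp_mul_mgf (μ := A.vol)
    (X := fun ω => ∑ j ∈ Finset.range n, g (A.path t j ω)) ((1 - ε) * (n * m)) hlam0
    (A.integrable_exp_sum hg hθ hg0 hgθ t n lam)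
  refine h1.trans ?_
  rw [A.mgf_sum_eq hg t n lam]
  have hlamθ : lam * θR = -ε := by rw [hlam, neg_mul, div_mul_cancel₀ _ hθ.ne']
  have hchord := aux_mgf_chord (C.μ i) hg hθ hg0 hgθ lam
  rw [← hmdef] at hchord
  set K := Real.exp (lam * θR) with hK
  have hKb : K ≤ 1 - ε + ε ^ 2 / 2 := by
    rw [hK, hlamθ]
    exact aux_exp_neg_quad_bound hε0.le
  have hpow : (mgf g (C.μ i) lam) ^ n ≤ Real.exp ((K - 1) * m / θR) ^ n :=
    pow_le_pow_left₀ mgf_nonneg hchord n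
  have hres : Real.exp (-lam * ((1 - ε) * (n * m))) * Real.exp ((K - 1) * m / θR) ^ n
      = Real.exp (-lam * ((1 - ε) * (n * m)) + n * ((K - 1) * m / θR)) := by
    rw [← Real.exp_nat_mul, ← Real.exp_add]
  calc Real.exp (-lam * ((1 - ε) * (n * m))) * (mgf g (C.μ i) lam) ^ n
      ≤ Real.exp (-lam * ((1 - ε) * (n * m))) * Real.exp ((K - 1) * m / θR) ^ n := by
        exact mul_le_mul_of_nonneg_left hpow (Real.exp_nonneg _)
    _ = Real.exp (-lam * ((1 - ε) * (n * m)) + n * ((K - 1) * m / θR)) := hres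
    _ ≤ Real.exp (-(n * m * ε ^ 2 / (3 * θR))) := by
        apply Real.exp_le_exp.mpr
        have hkey : (1 - ε) * ε + (K - 1) ≤ -(ε ^ 2 / 3) := by
          nlinarith [hKb]
        have hid : -lam * ((1 - ε) * (n * m)) + n * ((K - 1) * m / θR)
            = (n * m / θR) * ((1 - ε) * ε + (K - 1)) := by
          rw [hlam]; field_simp
        rw [hid]
        have hnm : 0 ≤ n * m / θR := by positivity
        calc (n * m / θR) * ((1 - ε) * ε + (K - 1))
            ≤ (n * m / θR) * (-(ε ^ 2 / 3)) := mul_le_mul_of_nonneg_left hkey hnm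
          _ = -(n * m * ε ^ 2 / (3 * θR)) := by ring

end Algo
end AuxTails

section AuxMeas
set_option linter.unusedSectionVars false
set_option maxHeartbeats 1000000
variable {S : Type*} [MeasurableSpace S] [MeasurableSingletonClass S]
  {C : Chain S} {i : S} {ε α : ℝ} {Ω : Type*} [mΩ : MeasurableSpace Ω]

namespace Algo

/-- σ-algebra generated by the sample paths indexed by a set of (iteration, sample) pairs. -/
def mAbove (A : Algo C i ε α Ω) (T : Set (ℕ × ℕ)) : MeasurableSpace Ω :=
  ⨆ p ∈ T, MeasurableSpace.comap (A.path p.1 p.2) inferInstance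

/-- σ-algebra of all iterations up to `k` (iterations `1,…,k`). -/
def HHs (A : Algo C i ε α Ω) (k : ℕ) : MeasurableSpace Ω :=
  A.mAbove {p | 1 ≤ p.1 ∧ p.1 ≤ k}

/-- σ-algebra of iteration `k` alone. -/
def mIter (A : Algo C i ε α Ω) (k : ℕ) : MeasurableSpace Ω :=
  A.mAbove {p | p.1 = k}

lemma mAbove_le (A : Algo C i ε α Ω) (T : Set (ℕ × ℕ)) : A.mAbove T ≤ mΩ :=
  iSup₂_le fun p _ => measurable_iff_comap_le.mp (A.meas_path p.1 p.2)

lemma mAbove_mono (A : Algo C i ε α Ω) {T₁ T₂ : Set (ℕ × ℕ)} (h : T₁ ⊆ T₂) :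
    A.mAbove T₁ ≤ A.mAbove T₂ :=
  biSup_mono h

lemma HHs_mono (A : Algo C i ε α Ω) {k₁ k₂ : ℕ} (h : k₁ ≤ k₂) : A.HHs k₁ ≤ A.HHs k₂ :=
  A.mAbove_mono fun p hp => ⟨hp.1, hp.2.trans h⟩

lemma measurable_path_mAbove (A : Algo C i ε α Ω) {T : Set (ℕ × ℕ)} {p : ℕ × ℕ} (hp : p ∈ T) :
    Measurable[A.mAbove T] (A.path p.1 p.2) :=
  measurable_iff_comap_le.mpr
    (le_iSup₂ (f := fun (q : ℕ × ℕ) (_ : q ∈ T) =>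
      MeasurableSpace.comap (A.path q.1 q.2) inferInstance) p hp)

lemma measurable_path_mIter (A : Algo C i ε α Ω) (k j : ℕ) :
    Measurable[A.mIter k] (A.path k j) :=
  A.measurable_path_mAbove (T := {p | p.1 = k}) (p := (k, j)) rfl

lemma measurable_avg_mIter (A : Algo C i ε α Ω) {g : (ℕ → S) → ℝ} (hg : Measurable g)
    (k n : ℕ) :
    Measurable[A.mIter k] (fun ω => (n : ℝ)⁻¹ * ∑ j ∈ Finset.range n, g (A.path k j ω)) := by
  refine Measurable.const_mul ?_ _
  exact Finset.measurable_sum _ fun j _ => hg.comp (A.measurable_path_mIter k j)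

lemma measurable_That (A : Algo C i ε α Ω) : ∀ k, 1 ≤ k → Measurable[A.HHs k] (A.That k) := by
  have hswitch : ∀ k, 1 ≤ k → Measurable[A.HHs k] (A.Nsamp k) →
      Measurable[A.HHs k] (A.That k) := by
    intro k hk hN
    have h : A.That k = fun ω => (fun (n : ℕ) (ω' : Ω) =>
        (n : ℝ)⁻¹ * ∑ j ∈ Finset.range n, (truncHit i (2 ^ k) (A.path k j ω') : ℝ))
        (A.Nsamp k ω) ω := by
      funext ω
      exact A.hThat k ω
    rw [h]
    refine aux_measurable_switch (F := fun (n : ℕ) (ω' : Ω) =>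
        (n : ℝ)⁻¹ * ∑ j ∈ Finset.range n, (truncHit i (2 ^ k) (A.path k j ω') : ℝ))
      hN (fun n => ?_)
    have := A.measurable_avg_mIter (g := gTrunc i (2 ^ k)) (measurable_gTrunc i (2 ^ k)) k n
    exact (this.mono (A.mAbove_mono fun p hp => ⟨hp ▸ hk, le_of_eq hp⟩) le_rfl)
  intro k hk
  induction k, hk using Nat.le_induction with
  | base =>
    refine hswitch 1 le_rfl ?_
    have : A.Nsamp 1 = fun _ => ⌈6 * (1 + ε) * Real.log (8 / α) / ε ^ 2⌉₊ := funext A.hN1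
    rw [this]
    exact measurable_const
  | succ k hk1 ih =>
    refine hswitch (k + 1) (by omega) ?_
    have h : A.Nsamp (k + 1) = fun ω =>
        ⌈3 * (1 + ε) * (2 ^ (k + 1) : ℝ) * Real.log (4 * (2 ^ (k + 1) : ℝ) / α) /
          (A.That k ω * ε ^ 2)⌉₊ := funext fun ω => A.hNsucc k ω hk1
    rw [h]
    have hinner : Measurable[A.HHs k] (fun ω =>
        3 * (1 + ε) * (2 ^ (k + 1) : ℝ) * Real.log (4 * (2 ^ (k + 1) : ℝ) / α) /
          (A.That k ω * ε ^ 2)) :=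
      Measurable.div measurable_const (ih.mul_const _)
    exact ((aux_measurable_natCeil.comp hinner).mono (A.HHs_mono (Nat.le_succ k)) le_rfl)

lemma measurable_Nsucc (A : Algo C i ε α Ω) {k : ℕ} (hk : 1 ≤ k) :
    Measurable[A.HHs k] (A.Nsamp (k + 1)) := by
  have h : A.Nsamp (k + 1) = fun ω =>
      ⌈3 * (1 + ε) * (2 ^ (k + 1) : ℝ) * Real.log (4 * (2 ^ (k + 1) : ℝ) / α) /
        (A.That k ω * ε ^ 2)⌉₊ := funext fun ω => A.hNsucc k ω hk
  rw [h]
  exact aux_measurable_natCeil.comp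
    (Measurable.div measurable_const ((A.measurable_That k hk).mul_const _))

lemma measurable_That_amb (A : Algo C i ε α Ω) {k : ℕ} (hk : 1 ≤ k) :
    Measurable (A.That k) :=
  (A.measurable_That k hk).mono (A.mAbove_le _) le_rfl

lemma measurable_Nsamp_amb (A : Algo C i ε α Ω) : ∀ k, 1 ≤ k → Measurable (A.Nsamp k) := by
  intro k hk
  match k, hk with
  | 1, _ =>
    have : A.Nsamp 1 = fun _ => ⌈6 * (1 + ε) * Real.log (8 / α) / ε ^ 2⌉₊ := funext A.hN1
    rw [this]; exact measurable_const
  | (k + 2), _ =>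
    exact (A.measurable_Nsucc (k := k + 1) (by omega)).mono (A.mAbove_le _) le_rfl

lemma measurable_phat_amb (A : Algo C i ε α Ω) {k : ℕ} (hk : 1 ≤ k) :
    Measurable (A.phat k) := by
  have h : A.phat k = fun ω => (fun (n : ℕ) (ω' : Ω) =>
      (n : ℝ)⁻¹ * ∑ j ∈ Finset.range n,
        (if ((2 ^ k : ℕ) : ℕ∞) < hit i (A.path k j ω') then (1 : ℝ) else 0))
      (A.Nsamp k ω) ω := by
    funext ω
    exact A.hphat k ω
  rw [h]
  refine aux_measurable_switch (F := fun (n : ℕ) (ω' : Ω) =>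
      (n : ℝ)⁻¹ * ∑ j ∈ Finset.range n,
        (if ((2 ^ k : ℕ) : ℕ∞) < hit i (A.path k j ω') then (1 : ℝ) else 0))
    (A.measurable_Nsamp_amb k hk) (fun n => ?_)
  refine Measurable.const_mul ?_ _
  refine Finset.measurable_sum _ fun j _ => ?_
  exact (measurable_indHit i (2 ^ k)).comp (A.meas_path k j)

lemma indep_iter (A : Algo C i ε α Ω) {k : ℕ} (hk : 1 ≤ k) :
    Indep (A.mIter k) (A.HHs (k - 1)) A.vol := by
  have hdisj : Disjoint {p : ℕ × ℕ | p.1 = k} {p : ℕ × ℕ | 1 ≤ p.1 ∧ p.1 ≤ k - 1} := by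
    rw [Set.disjoint_left]
    rintro p (hp : p.1 = k) ⟨hp1, hp2⟩
    omega
  have h := indep_iSup_of_disjoint
    (m := fun p : ℕ × ℕ => MeasurableSpace.comap (A.path p.1 p.2) inferInstance)
    (μ := A.vol) (S := {p : ℕ × ℕ | p.1 = k}) (T := {p : ℕ × ℕ | 1 ≤ p.1 ∧ p.1 ≤ k - 1})
    (fun p => measurable_iff_comap_le.mp (A.meas_path p.1 p.2))
    A.indep_path.iIndep hdisj
  exact h

lemma indep_mul (A : Algo C i ε α Ω) {k : ℕ} (hk : 1 ≤ k) {F B : Set Ω}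
    (hF : MeasurableSet[A.mIter k] F) (hB : MeasurableSet[A.HHs (k - 1)] B) :
    A.vol (F ∩ B) = A.vol F * A.vol B :=
  ((Indep_iff _ _ _).mp (A.indep_iter hk)) F B hF hB

end Algo
end AuxMeas

section AuxKey
set_option linter.unusedSectionVars false
set_option maxHeartbeats 1000000
variable {S : Type*} [MeasurableSpace S] [MeasurableSingletonClass S]
  {C : Chain S} {i : S} {ε α : ℝ} {Ω : Type*} [mΩ : MeasurableSpace Ω]

namespace Algo

lemma tails_vol_le (A : Algo C i ε α Ω) (hε : ε ∈ Set.Ioo (0:ℝ) 1) {g : (ℕ → S) → ℝ}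
    (hg : Measurable g) {θR : ℝ} (hθ : 0 < θR) (hg0 : ∀ f, 0 ≤ g f) (hgθ : ∀ f, g f ≤ θR)
    {m : ℝ} (hm : 0 < m) (hmdef : m = ∫ f, g f ∂ C.μ i) (t n : ℕ)
    {c : ℝ} (hc0 : 0 ≤ c) (hc : Real.exp (-(n * m * ε ^ 2 / (3 * θR))) ≤ c) :
    A.vol ({ω | (1 + ε) * (n * m) ≤ ∑ j ∈ Finset.range n, g (A.path t j ω)}
      ∪ {ω | ∑ j ∈ Finset.range n, g (A.path t j ω) ≤ (1 - ε) * (n * m)})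
      ≤ ENNReal.ofReal (2 * c) := by
  haveI := A.isProb
  have hup : A.vol {ω | (1 + ε) * (n * m) ≤ ∑ j ∈ Finset.range n, g (A.path t j ω)}
      ≤ ENNReal.ofReal c := by
    rw [ENNReal.le_ofReal_iff_toReal_le (measure_ne_top _ _) hc0]
    exact (A.tail_up hε hg hθ hg0 hgθ hm hmdef t n).trans hc
  have hlo : A.vol {ω | ∑ j ∈ Finset.range n, g (A.path t j ω) ≤ (1 - ε) * (n * m)}
      ≤ ENNReal.ofReal c := by
    rw [ENNReal.le_ofReal_iff_toReal_le (measure_ne_top _ _) hc0]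
    exact (A.tail_low hε hg hθ hg0 hgθ hm hmdef t n).trans hc
  calc A.vol _ ≤ _ + _ := measure_union_le _ _
    _ ≤ ENNReal.ofReal c + ENNReal.ofReal c := add_le_add hup hlo
    _ = ENNReal.ofReal (2 * c) := by
      rw [← ENNReal.ofReal_add hc0 hc0]; congr 1; ring

lemma key_adaptive (A : Algo C i ε α Ω) (hε : ε ∈ Set.Ioo (0:ℝ) 1)
    {g : (ℕ → S) → ℝ} (hg : Measurable g) {θR : ℝ} (hθ : 0 < θR)
    (hg0 : ∀ f, 0 ≤ g f) (hgθ : ∀ f, g f ≤ θR)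
    {m : ℝ} (hm : 0 < m) (hmdef : m = ∫ f, g f ∂ C.μ i)
    {k : ℕ} (hk : 1 ≤ k) (E G : Set Ω)
    (hG : MeasurableSet[A.HHs k] G)
    (hn1 : ∀ ω ∈ G, 1 ≤ A.Nsamp (k + 1) ω)
    {c : ℝ} (hc0 : 0 ≤ c)
    (hcb : ∀ ω ∈ G, Real.exp (-((A.Nsamp (k + 1) ω : ℝ) * m * ε ^ 2 / (3 * θR))) ≤ c)
    (hE : ∀ (n : ℕ), 1 ≤ n → ∀ ω ∈ E, A.Nsamp (k + 1) ω = n →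
      ((1 + ε) * (n * m) ≤ ∑ j ∈ Finset.range n, g (A.path (k + 1) j ω)
        ∨ ∑ j ∈ Finset.range n, g (A.path (k + 1) j ω) ≤ (1 - ε) * (n * m))) :
    A.vol (E ∩ G) ≤ ENNReal.ofReal (2 * c) := by
  haveI := A.isProb
  classical
  set Fup : ℕ → Set Ω := fun n =>
    {ω | (1 + ε) * (n * m) ≤ ∑ j ∈ Finset.range n, g (A.path (k + 1) j ω)} with hFup
  set Flo : ℕ → Set Ω := fun n =>
    {ω | ∑ j ∈ Finset.range n, g (A.path (k + 1) j ω) ≤ (1 - ε) * (n * m)} with hFlo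
  set B : ℕ → Set Ω := fun n => {ω | A.Nsamp (k + 1) ω = n} ∩ G with hB
  -- measurability
  have hSmeas : ∀ n, Measurable[A.mIter (k + 1)]
      (fun ω => ∑ j ∈ Finset.range n, g (A.path (k + 1) j ω)) := fun n =>
    Finset.measurable_sum _ fun j _ => hg.comp (A.measurable_path_mIter (k + 1) j)
  have hFmeas : ∀ n, MeasurableSet[A.mIter (k + 1)] (Fup n ∪ Flo n) := fun n =>
    (measurableSet_le measurable_const (hSmeas n)).union
      (measurableSet_le (hSmeas n) measurable_const)
  have hNmeas : Measurable[A.HHs k] (A.Nsamp (k + 1)) := A.measurable_Nsucc hk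
  have hBmeas : ∀ n, MeasurableSet[A.HHs k] (B n) := fun n =>
    (hNmeas (measurableSet_singleton n)).inter hG
  have hBmeasAmb : ∀ n, MeasurableSet (B n) := fun n =>
    (A.mAbove_le _) _ (hBmeas n)
  -- inclusion
  have hincl : E ∩ G ⊆ ⋃ n, ((Fup n ∪ Flo n) ∩ B n) := by
    rintro ω ⟨hωE, hωG⟩
    refine Set.mem_iUnion.mpr ⟨A.Nsamp (k + 1) ω, ?_, rfl, hωG⟩
    rcases hE (A.Nsamp (k + 1) ω) (hn1 ω hωG) ω hωE rfl with h | h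
    · exact Or.inl h
    · exact Or.inr h
  -- independence bound per term
  have hterm : ∀ n, A.vol ((Fup n ∪ Flo n) ∩ B n) ≤ ENNReal.ofReal (2 * c) * A.vol (B n) := by
    intro n
    rcases Set.eq_empty_or_nonempty (B n) with hBn | ⟨ω₀, hω₀⟩
    · simp [hBn]
    · have hprod : A.vol ((Fup n ∪ Flo n) ∩ B n)
          = A.vol (Fup n ∪ Flo n) * A.vol (B n) := by
        have := A.indep_mul (k := k + 1) (by omega) (hFmeas n)
          (by simpa using hBmeas n)
        exact this
      rw [hprod]
      refine mul_le_mul_left ?_ _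
      have hcn : Real.exp (-(n * m * ε ^ 2 / (3 * θR))) ≤ c := by
        have h1 := hcb ω₀ hω₀.2
        rwa [hω₀.1] at h1
      exact A.tails_vol_le hε hg hθ hg0 hgθ hm hmdef (k + 1) n hc0 hcn
  -- sum up
  have hdisj : Pairwise (Function.onFun Disjoint B) := by
    intro a b hab
    rw [Function.onFun, Set.disjoint_left]
    rintro ω ⟨ha, _⟩ ⟨hb, _⟩
    exact hab (ha.symm.trans hb)
  calc A.vol (E ∩ G) ≤ A.vol (⋃ n, ((Fup n ∪ Flo n) ∩ B n)) := measure_mono hincl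
    _ ≤ ∑' n, A.vol ((Fup n ∪ Flo n) ∩ B n) := measure_iUnion_le _
    _ ≤ ∑' n, ENNReal.ofReal (2 * c) * A.vol (B n) := ENNReal.tsum_le_tsum hterm
    _ = ENNReal.ofReal (2 * c) * ∑' n, A.vol (B n) := ENNReal.tsum_mul_left
    _ = ENNReal.ofReal (2 * c) * A.vol (⋃ n, B n) := by
        rw [measure_iUnion hdisj hBmeasAmb]
    _ ≤ ENNReal.ofReal (2 * c) * 1 := by
        exact mul_le_mul_right (prob_le_one) _
    _ = ENNReal.ofReal (2 * c) := mul_one _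

end Algo
end AuxKey

section AuxIter
set_option linter.unusedSectionVars false
set_option maxHeartbeats 1000000
variable {S : Type*} [MeasurableSpace S] [MeasurableSingletonClass S]
  {C : Chain S} {i : S} {ε α : ℝ} {Ω : Type*} [mΩ : MeasurableSpace Ω]

lemma aux_avg_tails {n : ℕ} (hn : 1 ≤ n) {Sv m εv : ℝ}
    (h : (n : ℝ)⁻¹ * Sv ∉ Set.Icc ((1 - εv) * m) ((1 + εv) * m)) :
    (1 + εv) * (n * m) ≤ Sv ∨ Sv ≤ (1 - εv) * (n * m) := by
  have hn' : (0:ℝ) < n := by exact_mod_cast hn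
  have hid : (n : ℝ) * ((n : ℝ)⁻¹ * Sv) = Sv := by
    field_simp
  rw [Set.mem_Icc, not_and_or] at h
  rcases h with h | h
  · push_neg at h
    right
    nlinarith [mul_lt_mul_of_pos_left h hn']
  · push_neg at h
    left
    nlinarith [mul_lt_mul_of_pos_left h hn']

lemma aux_one_sub_avg {n : ℕ} (hn : 1 ≤ n) (u : ℕ → ℝ) :
    1 - (n : ℝ)⁻¹ * ∑ j ∈ Finset.range n, u j
      = (n : ℝ)⁻¹ * ∑ j ∈ Finset.range n, (1 - u j) := by
  have hn' : (n : ℝ) ≠ 0 := by positivity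
  rw [Finset.sum_sub_distrib, Finset.sum_const, Finset.card_range, mul_sub]
  rw [nsmul_eq_mul, mul_one, inv_mul_cancel₀ hn']

namespace Algo

/-- Failure event for the estimate `T̂` at iteration `k`. -/
def badT (A : Algo C i ε α Ω) (k : ℕ) : Set Ω :=
  {ω | A.That k ω ∉ Set.Icc ((1 - ε) * C.EThat i (2 ^ k)) ((1 + ε) * C.EThat i (2 ^ k))}

/-- Failure event for the estimate `1 - p̂` at iteration `k`. -/
def badP (A : Algo C i ε α Ω) (k : ℕ) : Set Ω :=
  {ω | 1 - A.phat k ω ∉ Set.Icc ((1 - ε) * (1 - C.tailP i (2 ^ k)))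
    ((1 + ε) * (1 - C.tailP i (2 ^ k)))}

variable (A : Algo C i ε α Ω)

lemma badT_compl_meas {k : ℕ} (hk : 1 ≤ k) : MeasurableSet[A.HHs k] (A.badT k)ᶜ := by
  have h : (A.badT k)ᶜ = A.That k ⁻¹' (Set.Icc ((1 - ε) * C.EThat i (2 ^ k))
      ((1 + ε) * C.EThat i (2 ^ k))) := by
    ext ω; simp [Algo.badT]
  rw [h]
  exact (A.measurable_That k hk) measurableSet_Icc

lemma mem_badT_compl {k : ℕ} {ω : Ω} :
    ω ∈ (A.badT k)ᶜ ↔ (1 - ε) * C.EThat i (2 ^ k) ≤ A.That k ω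
      ∧ A.That k ω ≤ (1 + ε) * C.EThat i (2 ^ k) := by
  simp [Algo.badT, Set.mem_Icc]

section Bounds

variable (hε : ε ∈ Set.Ioo (0:ℝ) 1) (hα : α ∈ Set.Ioo (0:ℝ) 1)

include hε hα

lemma N1_pos : 1 ≤ ⌈6 * (1 + ε) * Real.log (8 / α) / ε ^ 2⌉₊ := by
  obtain ⟨hε0, hε1⟩ := hε; obtain ⟨hα0, hα1⟩ := hα
  have hlog : 0 < Real.log (8 / α) :=
    Real.log_pos (by rw [lt_div_iff₀ hα0]; linarith)
  exact Nat.one_le_iff_ne_zero.mpr (by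
    have : 0 < 6 * (1 + ε) * Real.log (8 / α) / ε ^ 2 := by positivity
    exact (Nat.ceil_pos.mpr this).ne')

lemma vol_badT_one : A.vol (A.badT 1) ≤ ENNReal.ofReal (2 * (α / 8)) := by
  haveI := A.isProb
  haveI := C.isProb i
  have hε0 := hε.1; have hε1 := hε.2; have hα0 := hα.1; have hα1 := hα.2
  set n₁ := ⌈6 * (1 + ε) * Real.log (8 / α) / ε ^ 2⌉₊ with hn₁def
  have hn₁ : 1 ≤ n₁ := N1_pos hε hα
  set m := C.EThat i (2 ^ 1) with hmdef
  have hm1 : 1 ≤ m := one_le_EThat C i (by norm_num)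
  have hm : 0 < m := by linarith
  have hlog : 0 < Real.log (8 / α) :=
    Real.log_pos (by rw [lt_div_iff₀ hα0]; linarith)
  have hsub : A.badT 1 ⊆
      ({ω | (1 + ε) * (n₁ * m) ≤ ∑ j ∈ Finset.range n₁, gTrunc i (2 ^ 1) (A.path 1 j ω)}
        ∪ {ω | ∑ j ∈ Finset.range n₁, gTrunc i (2 ^ 1) (A.path 1 j ω) ≤ (1 - ε) * (n₁ * m)}) := by
    intro ω hω
    have hT := A.hThat 1 ω
    rw [A.hN1 ω] at hT
    have hω' : (n₁ : ℝ)⁻¹ * ∑ j ∈ Finset.range n₁,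
        (truncHit i (2 ^ 1) (A.path 1 j ω) : ℝ) ∉ Set.Icc ((1 - ε) * m) ((1 + ε) * m) := by
      rw [← hT]; exact hω
    rcases aux_avg_tails hn₁ hω' with h | h
    · exact Or.inl h
    · exact Or.inr h
  refine (measure_mono hsub).trans ?_
  refine A.tails_vol_le ⟨hε0, hε1⟩ (measurable_gTrunc i (2 ^ 1)) (by norm_num : (0:ℝ) < 2)
    (gTrunc_nonneg i _) (fun f => by exact_mod_cast gTrunc_le i (2 ^ 1) f)
    hm (EThat_eq_integral C i _) 1 n₁ (by positivity) ?_
  have hxle : 6 * (1 + ε) * Real.log (8 / α) / ε ^ 2 ≤ (n₁ : ℝ) := Nat.le_ceil _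
  have hkey : Real.log (8 / α) ≤ (n₁ : ℝ) * m * ε ^ 2 / (3 * 2) := by
    rw [le_div_iff₀ (by norm_num : (0:ℝ) < 3 * 2)]
    have h1 : 6 * (1 + ε) * Real.log (8 / α) ≤ (n₁ : ℝ) * ε ^ 2 := by
      have := (div_le_iff₀ (by positivity : (0:ℝ) < ε ^ 2)).mp hxle
      linarith
    have h6 : 6 * Real.log (8 / α) ≤ (n₁ : ℝ) * ε ^ 2 := by nlinarith
    have h7 : (n₁ : ℝ) * ε ^ 2 ≤ (n₁ : ℝ) * m * ε ^ 2 := by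
      nlinarith [(Nat.cast_nonneg n₁ : (0:ℝ) ≤ (n₁:ℝ)), sq_nonneg ε]
    linarith
  calc Real.exp (-((n₁ : ℝ) * m * ε ^ 2 / (3 * 2))) ≤ Real.exp (-Real.log (8 / α)) :=
      Real.exp_le_exp.mpr (neg_le_neg hkey)
    _ = α / 8 := by
      rw [Real.exp_neg, Real.exp_log (by positivity), inv_div]

lemma vol_badP_one (hq : 1 / 2 ≤ 1 - C.tailP i (2 ^ 1)) :
    A.vol (A.badP 1) ≤ ENNReal.ofReal (2 * (α / 8)) := by
  haveI := A.isProb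
  haveI := C.isProb i
  have hε0 := hε.1; have hε1 := hε.2; have hα0 := hα.1; have hα1 := hα.2
  set n₁ := ⌈6 * (1 + ε) * Real.log (8 / α) / ε ^ 2⌉₊ with hn₁def
  have hn₁ : 1 ≤ n₁ := N1_pos hε hα
  set m := 1 - C.tailP i (2 ^ 1) with hmdef
  have hm : 0 < m := by linarith
  have hlog : 0 < Real.log (8 / α) :=
    Real.log_pos (by rw [lt_div_iff₀ hα0]; linarith)
  have hsub : A.badP 1 ⊆
      ({ω | (1 + ε) * (n₁ * m) ≤ ∑ j ∈ Finset.range n₁, gQ i (2 ^ 1) (A.path 1 j ω)}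
        ∪ {ω | ∑ j ∈ Finset.range n₁, gQ i (2 ^ 1) (A.path 1 j ω) ≤ (1 - ε) * (n₁ * m)}) := by
    intro ω hω
    have hP := A.hphat 1 ω
    rw [A.hN1 ω] at hP
    have hval : 1 - A.phat 1 ω = (n₁ : ℝ)⁻¹ * ∑ j ∈ Finset.range n₁,
        gQ i (2 ^ 1) (A.path 1 j ω) := by
      rw [hP, aux_one_sub_avg hn₁]
      rfl
    have hω' : (n₁ : ℝ)⁻¹ * ∑ j ∈ Finset.range n₁, gQ i (2 ^ 1) (A.path 1 j ω)
        ∉ Set.Icc ((1 - ε) * m) ((1 + ε) * m) := by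
      rw [← hval]; exact hω
    rcases aux_avg_tails hn₁ hω' with h | h
    · exact Or.inl h
    · exact Or.inr h
  refine (measure_mono hsub).trans ?_
  refine A.tails_vol_le ⟨hε0, hε1⟩ (measurable_gQ i (2 ^ 1)) (by norm_num : (0:ℝ) < 1)
    (gQ_nonneg i _) (fun f => by simpa using gQ_le_one i 2 f)
    hm (integral_gQ_eq C i _).symm 1 n₁ (by positivity) ?_
  have hxle : 6 * (1 + ε) * Real.log (8 / α) / ε ^ 2 ≤ (n₁ : ℝ) := Nat.le_ceil _
  have hkey : Real.log (8 / α) ≤ (n₁ : ℝ) * m * ε ^ 2 / (3 * 1) := by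
    rw [le_div_iff₀ (by norm_num : (0:ℝ) < 3 * 1)]
    have h1 : 6 * (1 + ε) * Real.log (8 / α) ≤ (n₁ : ℝ) * ε ^ 2 := by
      have := (div_le_iff₀ (by positivity : (0:ℝ) < ε ^ 2)).mp hxle
      linarith
    have h6 : 6 * Real.log (8 / α) ≤ (n₁ : ℝ) * ε ^ 2 := by nlinarith
    have h7 : (n₁ : ℝ) * ε ^ 2 * (1 / 2) ≤ (n₁ : ℝ) * m * ε ^ 2 := by
      nlinarith [(Nat.cast_nonneg n₁ : (0:ℝ) ≤ (n₁:ℝ)), sq_nonneg ε]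
    linarith
  calc Real.exp (-((n₁ : ℝ) * m * ε ^ 2 / (3 * 1))) ≤ Real.exp (-Real.log (8 / α)) :=
      Real.exp_le_exp.mpr (neg_le_neg hkey)
    _ = α / 8 := by
      rw [Real.exp_neg, Real.exp_log (by positivity), inv_div]
    _ ≤ α / 8 := le_rfl

lemma Nsucc_facts {k : ℕ} (hk : 1 ≤ k) {ω : Ω} (hω : ω ∈ (A.badT k)ᶜ) :
    1 ≤ A.Nsamp (k + 1) ω ∧
      3 * (1 + ε) * (2 ^ (k + 1) : ℝ) * Real.log (4 * (2 ^ (k + 1) : ℝ) / α) /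
        ((1 + ε) * C.EThat i (2 ^ k) * ε ^ 2) ≤ (A.Nsamp (k + 1) ω : ℝ) := by
  obtain ⟨hε0, hε1⟩ := hε; obtain ⟨hα0, hα1⟩ := hα
  obtain ⟨hlo, hhi⟩ := (A.mem_badT_compl (k := k)).mp hω
  have hE1 : 1 ≤ C.EThat i (2 ^ k) := one_le_EThat C i (Nat.one_le_two_pow)
  have hTpos : 0 < A.That k ω := lt_of_lt_of_le (by nlinarith) hlo
  have hθ' : (0:ℝ) < (2 ^ (k + 1) : ℝ) := by positivity
  have hL : 0 < Real.log (4 * (2 ^ (k + 1) : ℝ) / α) := by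
    refine Real.log_pos ?_
    rw [lt_div_iff₀ hα0]
    have : (1:ℝ) ≤ (2 ^ (k + 1) : ℝ) := one_le_pow₀ (by norm_num)
    nlinarith
  have hNval := A.hNsucc k ω hk
  constructor
  · rw [hNval]
    refine Nat.one_le_iff_ne_zero.mpr (Nat.ceil_pos.mpr ?_).ne'
    positivity
  · rw [hNval]
    refine le_trans ?_ (Nat.le_ceil _)
    have hden : 0 < A.That k ω * ε ^ 2 := by positivity
    have hden2 : 0 < (1 + ε) * C.EThat i (2 ^ k) * ε ^ 2 := by positivity
    refine div_le_div_of_nonneg_left (by positivity) hden ?_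
    nlinarith [hhi, sq_nonneg ε]

lemma vol_badT_succ {k : ℕ} (hk : 1 ≤ k) :
    A.vol (A.badT (k + 1) ∩ (A.badT k)ᶜ)
      ≤ ENNReal.ofReal (2 * (α / (4 * 2 ^ (k + 1)))) := by
  haveI := A.isProb
  haveI := C.isProb i
  have hε0 := hε.1; have hε1 := hε.2; have hα0 := hα.1; have hα1 := hα.2
  set m := C.EThat i (2 ^ (k + 1)) with hmdef
  have hm1 : 1 ≤ m := one_le_EThat C i Nat.one_le_two_pow
  have hm : 0 < m := by linarith
  set θ' := (2 ^ (k + 1) : ℝ) with hθ'def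
  have hθ' : (0:ℝ) < θ' := by positivity
  set L := Real.log (4 * θ' / α) with hLdef
  have hL : 0 < L := by
    refine Real.log_pos ?_
    rw [lt_div_iff₀ hα0]
    have : (1:ℝ) ≤ θ' := by rw [hθ'def]; exact one_le_pow₀ (by norm_num)
    nlinarith
  have hc0 : (0:ℝ) ≤ α / (4 * 2 ^ (k + 1)) := by positivity
  refine A.key_adaptive ⟨hε0, hε1⟩ (measurable_gTrunc i (2 ^ (k + 1))) hθ'
    (gTrunc_nonneg i _) (fun f => by
      have := gTrunc_le i (2 ^ (k + 1)) f
      rw [hθ'def]; exact_mod_cast this)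
    hm (EThat_eq_integral C i _) hk _ _ (A.badT_compl_meas hk)
    (fun ω hω => (A.Nsucc_facts hε hα hk hω).1) hc0 ?_ ?_
  · -- exp bound
    intro ω hω
    have hNge := (A.Nsucc_facts hε hα hk hω).2
    set N := (A.Nsamp (k + 1) ω : ℝ) with hNdef
    have hEk : C.EThat i (2 ^ k) ≤ m := EThat_mono C i (Nat.pow_le_pow_right (by norm_num) (Nat.le_succ k))
    have hstep : 3 * θ' * L / (m * ε ^ 2) ≤ N := by
      refine le_trans ?_ hNge
      have h1 : 3 * (1 + ε) * θ' * L / ((1 + ε) * C.EThat i (2 ^ k) * ε ^ 2)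
          = 3 * θ' * L / (C.EThat i (2 ^ k) * ε ^ 2) := by
        rw [show 3 * (1 + ε) * θ' * L = (1 + ε) * (3 * θ' * L) by ring,
          show (1 + ε) * C.EThat i (2 ^ k) * ε ^ 2 = (1 + ε) * (C.EThat i (2 ^ k) * ε ^ 2) by ring,
          mul_div_mul_left _ _ (by positivity : (1:ℝ) + ε ≠ 0)]
      rw [h1]
      have hE1 : (1:ℝ) ≤ C.EThat i (2 ^ k) := one_le_EThat C i Nat.one_le_two_pow
      refine div_le_div_of_nonneg_left (by positivity) (by positivity) ?_
      nlinarith [sq_nonneg ε]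
    have h2 : 3 * θ' * L ≤ N * (m * ε ^ 2) := (div_le_iff₀ (by positivity)).mp hstep
    have h3 : L ≤ N * m * ε ^ 2 / (3 * θ') := by
      rw [le_div_iff₀ (by positivity)]
      nlinarith
    calc Real.exp (-(N * m * ε ^ 2 / (3 * θ'))) ≤ Real.exp (-L) :=
        Real.exp_le_exp.mpr (neg_le_neg h3)
      _ = α / (4 * 2 ^ (k + 1)) := by
        rw [hLdef, Real.exp_neg, Real.exp_log (by positivity), inv_div]
  · -- tail inclusion
    intro n hn ω hωE hNn
    have hT := A.hThat (k + 1) ω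
    rw [hNn] at hT
    have hω' : (n : ℝ)⁻¹ * ∑ j ∈ Finset.range n,
        (truncHit i (2 ^ (k + 1)) (A.path (k + 1) j ω) : ℝ)
        ∉ Set.Icc ((1 - ε) * m) ((1 + ε) * m) := by
      rw [← hT]; exact hωE
    rcases aux_avg_tails hn hω' with h | h
    · exact Or.inl h
    · exact Or.inr h

lemma vol_badP_succ {k : ℕ} (hk : 1 ≤ k) (hq : 1 / 2 ≤ 1 - C.tailP i (2 ^ (k + 1))) :
    A.vol (A.badP (k + 1) ∩ (A.badT k)ᶜ)
      ≤ ENNReal.ofReal (2 * (α / (4 * 2 ^ (k + 1)))) := by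
  haveI := A.isProb
  haveI := C.isProb i
  have hε0 := hε.1; have hε1 := hε.2; have hα0 := hα.1; have hα1 := hα.2
  set m := 1 - C.tailP i (2 ^ (k + 1)) with hmdef
  have hm : 0 < m := by linarith
  set θ' := (2 ^ (k + 1) : ℝ) with hθ'def
  have hθ' : (0:ℝ) < θ' := by positivity
  set L := Real.log (4 * θ' / α) with hLdef
  have hL : 0 < L := by
    refine Real.log_pos ?_
    rw [lt_div_iff₀ hα0]
    have : (1:ℝ) ≤ θ' := by rw [hθ'def]; exact one_le_pow₀ (by norm_num)
    nlinarith
  have hc0 : (0:ℝ) ≤ α / (4 * 2 ^ (k + 1)) := by positivity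
  refine A.key_adaptive ⟨hε0, hε1⟩ (measurable_gQ i (2 ^ (k + 1))) (by norm_num : (0:ℝ) < 1)
    (gQ_nonneg i _) (fun f => by simpa using gQ_le_one i (2 ^ (k + 1)) f)
    hm (integral_gQ_eq C i _).symm hk _ _ (A.badT_compl_meas hk)
    (fun ω hω => (A.Nsucc_facts hε hα hk hω).1) hc0 ?_ ?_
  · -- exp bound
    intro ω hω
    have hNge := (A.Nsucc_facts hε hα hk hω).2
    set N := (A.Nsamp (k + 1) ω : ℝ) with hNdef
    have hEk : C.EThat i (2 ^ k) ≤ (2 ^ k : ℝ) := by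
      have := EThat_le_theta C i (2 ^ k)
      exact_mod_cast this
    have hθhalf : (2 ^ k : ℝ) = θ' / 2 := by
      rw [hθ'def]; ring
    have hstep : 6 * L / ε ^ 2 ≤ N := by
      refine le_trans ?_ hNge
      have h1 : 3 * (1 + ε) * θ' * L / ((1 + ε) * C.EThat i (2 ^ k) * ε ^ 2)
          = 3 * θ' * L / (C.EThat i (2 ^ k) * ε ^ 2) := by
        rw [show 3 * (1 + ε) * θ' * L = (1 + ε) * (3 * θ' * L) by ring,
          show (1 + ε) * C.EThat i (2 ^ k) * ε ^ 2 = (1 + ε) * (C.EThat i (2 ^ k) * ε ^ 2) by ring,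
          mul_div_mul_left _ _ (by positivity : (1:ℝ) + ε ≠ 0)]
      rw [h1]
      have hE1 : (1:ℝ) ≤ C.EThat i (2 ^ k) := one_le_EThat C i Nat.one_le_two_pow
      have hEθ : C.EThat i (2 ^ k) * ε ^ 2 ≤ (θ' / 2) * ε ^ 2 := by
        rw [← hθhalf]
        nlinarith [sq_nonneg ε]
      calc 6 * L / ε ^ 2 = 3 * θ' * L / ((θ' / 2) * ε ^ 2) := by
            field_simp; ring
        _ ≤ 3 * θ' * L / (C.EThat i (2 ^ k) * ε ^ 2) :=
            div_le_div_of_nonneg_left (by positivity) (by positivity) hEθ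
    have h2 : 6 * L ≤ N * ε ^ 2 := (div_le_iff₀ (by positivity)).mp hstep
    have h3 : L ≤ N * m * ε ^ 2 / (3 * 1) := by
      rw [le_div_iff₀ (by positivity)]
      nlinarith [mul_le_mul_of_nonneg_right h2 hm.le]
    calc Real.exp (-(N * m * ε ^ 2 / (3 * 1))) ≤ Real.exp (-L) :=
        Real.exp_le_exp.mpr (neg_le_neg h3)
      _ = α / (4 * 2 ^ (k + 1)) := by
        rw [hLdef, Real.exp_neg, Real.exp_log (by positivity), inv_div]
  · -- tail inclusion
    intro n hn ω hωE hNn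
    have hP := A.hphat (k + 1) ω
    rw [hNn] at hP
    have hval : 1 - A.phat (k + 1) ω = (n : ℝ)⁻¹ * ∑ j ∈ Finset.range n,
        gQ i (2 ^ (k + 1)) (A.path (k + 1) j ω) := by
      rw [hP, aux_one_sub_avg hn]
      rfl
    have hω' : (n : ℝ)⁻¹ * ∑ j ∈ Finset.range n, gQ i (2 ^ (k + 1)) (A.path (k + 1) j ω)
        ∉ Set.Icc ((1 - ε) * m) ((1 + ε) * m) := by
      rw [← hval]; exact hωE
    rcases aux_avg_tails hn hω' with h | h
    · exact Or.inl h
    · exact Or.inr h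

end Bounds
end Algo
end AuxIter
/-- Lemma 5 of the paper. If `t₀` is such that
`P_i(T_i > θ^{(t₀)}) < 1/2`, then for every `t ≥ t₀`, with probability at least `1 − α`,
simultaneously `(1 − p̂^{(k)})` lies within a `(1 ± ε)` multiplicative interval around
`1 − P_i(T_i > θ^{(k)})` for all `k = t₀, …, t`, and `T̂_i^{(k)}` lies within a `(1 ± ε)`
multiplicative interval around `E_i[min(T_i, θ^{(k)})]` for all `k = 1, …, t`. -/
theorem statement2 {S : Type*} [MeasurableSpace S] [MeasurableSingletonClass S] [Countable S]
    (C : Chain S) (hirr : C.Irreducible) (hrec : C.PositiveRecurrent)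
    (i : S) (ε α : ℝ) (hε : ε ∈ Set.Ioo (0 : ℝ) 1) (hα : α ∈ Set.Ioo (0 : ℝ) 1)
    {Ω : Type*} [MeasurableSpace Ω] (A : Algo C i ε α Ω)
    (t₀ : ℕ) (ht₀ : 1 ≤ t₀) (hhalf : C.tailP i (2 ^ t₀) < 1 / 2)
    (t : ℕ) (ht : t₀ ≤ t) :
    1 - α ≤ (A.vol {ω |
      (∀ k, t₀ ≤ k → k ≤ t →
        1 - A.phat k ω ∈ Set.Icc ((1 - ε) * (1 - C.tailP i (2 ^ k)))
          ((1 + ε) * (1 - C.tailP i (2 ^ k)))) ∧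
      (∀ k, 1 ≤ k → k ≤ t →
        A.That k ω ∈ Set.Icc ((1 - ε) * C.EThat i (2 ^ k))
          ((1 + ε) * C.EThat i (2 ^ k)))}).toReal := by
  classical
  haveI := A.isProb
  have hε0 := hε.1; have hε1 := hε.2; have hα0 := hα.1; have hα1 := hα.2
  set bp : ℕ → Set Ω := fun k => if t₀ ≤ k then A.badP k else ∅ with hbp
  set D : ℕ → Set Ω := fun τ => ⋃ k ∈ Finset.Icc 1 τ, (A.badT k ∪ bp k) with hD
  -- measurability
  have hbadT_meas : ∀ k, 1 ≤ k → MeasurableSet (A.badT k) := by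
    intro k hk
    have h := (A.mAbove_le _) _ (A.badT_compl_meas (k := k) hk)
    simpa using h.compl
  have hbadP_meas : ∀ k, 1 ≤ k → MeasurableSet (A.badP k) := by
    intro k hk
    have hmeas : Measurable (fun ω => 1 - A.phat k ω) :=
      measurable_const.sub (A.measurable_phat_amb hk)
    have h : A.badP k = ((fun ω => 1 - A.phat k ω) ⁻¹'
        (Set.Icc ((1 - ε) * (1 - C.tailP i (2 ^ k)))
          ((1 + ε) * (1 - C.tailP i (2 ^ k)))))ᶜ := by
      ext ω; simp [Algo.badP]
    rw [h]
    exact (hmeas measurableSet_Icc).compl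
  have hbp_meas : ∀ k, 1 ≤ k → MeasurableSet (bp k) := by
    intro k hk
    rw [hbp]
    by_cases h : t₀ ≤ k
    · simpa [if_pos h] using hbadP_meas k hk
    · simp [if_neg h]
  have hD_meas : ∀ τ, MeasurableSet (D τ) := by
    intro τ
    rw [hD]
    refine MeasurableSet.biUnion (Finset.countable_toSet _) (fun k hk => ?_)
    have hk1 : 1 ≤ k := (Finset.mem_Icc.mp hk).1
    exact (hbadT_meas k hk1).union (hbp_meas k hk1)
  -- tail probabilities stay above 1/2
  have hq : ∀ k, t₀ ≤ k → 1 / 2 ≤ 1 - C.tailP i (2 ^ k) := by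
    intro k hk
    have h1 : C.tailP i (2 ^ k) ≤ C.tailP i (2 ^ t₀) :=
      tailP_anti C i (Nat.pow_le_pow_right (by norm_num) hk)
    linarith
  -- toReal union subadditivity
  have hUnion : ∀ X Y : Set Ω, (A.vol (X ∪ Y)).toReal ≤ (A.vol X).toReal + (A.vol Y).toReal := by
    intro X Y
    have h := measure_union_le (μ := A.vol) X Y
    calc (A.vol (X ∪ Y)).toReal ≤ (A.vol X + A.vol Y).toReal :=
        ENNReal.toReal_mono
          (ENNReal.add_ne_top.mpr ⟨measure_ne_top _ _, measure_ne_top _ _⟩) h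
      _ = (A.vol X).toReal + (A.vol Y).toReal :=
        ENNReal.toReal_add (measure_ne_top _ _) (measure_ne_top _ _)
  -- induction on the number of iterations
  have hind : ∀ τ, 1 ≤ τ → (A.vol (D τ)).toReal ≤ α * (1 - (1 / 2) ^ τ) := by
    intro τ hτ
    induction τ, hτ using Nat.le_induction with
    | base =>
      have hD1 : D 1 = A.badT 1 ∪ bp 1 := by
        rw [hD]
        simp
      have hT1 : (A.vol (A.badT 1)).toReal ≤ 2 * (α / 8) :=
        ENNReal.toReal_le_of_le_ofReal (by positivity) (A.vol_badT_one hε hα)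
      have hP1 : (A.vol (bp 1)).toReal ≤ 2 * (α / 8) := by
        simp only [hbp]
        by_cases h : t₀ ≤ 1
        · rw [if_pos h]
          exact ENNReal.toReal_le_of_le_ofReal (by positivity)
            (A.vol_badP_one hε hα (hq 1 h))
        · rw [if_neg h]
          simp
          positivity
      rw [hD1]
      calc (A.vol (A.badT 1 ∪ bp 1)).toReal
          ≤ (A.vol (A.badT 1)).toReal + (A.vol (bp 1)).toReal := hUnion _ _
        _ ≤ 2 * (α / 8) + 2 * (α / 8) := add_le_add hT1 hP1
        _ ≤ α * (1 - (1 / 2) ^ 1) := le_of_eq (by ring)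
    | succ τ hτ1 ih =>
      have hsub : D (τ + 1) ⊆ D τ ∪ ((A.badT (τ + 1) ∩ (A.badT τ)ᶜ)
          ∪ (bp (τ + 1) ∩ (A.badT τ)ᶜ)) := by
        intro ω hω
        rw [hD] at hω
        obtain ⟨k, hk, hmem⟩ := Set.mem_iUnion₂.mp hω
        have hk' := Finset.mem_Icc.mp hk
        rcases Nat.lt_or_ge k (τ + 1) with hlt | hge
        · exact Or.inl (by
            rw [hD]
            exact Set.mem_iUnion₂.mpr ⟨k, Finset.mem_Icc.mpr ⟨hk'.1, by omega⟩, hmem⟩)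
        · have hkeq : k = τ + 1 := by omega
          subst hkeq
          by_cases hbad : ω ∈ A.badT τ
          · exact Or.inl (by
              rw [hD]
              exact Set.mem_iUnion₂.mpr ⟨τ, Finset.mem_Icc.mpr ⟨hτ1, le_rfl⟩, Or.inl hbad⟩)
          · rcases hmem with hT | hB
            · exact Or.inr (Or.inl ⟨hT, hbad⟩)
            · exact Or.inr (Or.inr ⟨hB, hbad⟩)
      have hT : (A.vol (A.badT (τ + 1) ∩ (A.badT τ)ᶜ)).toReal
          ≤ 2 * (α / (4 * 2 ^ (τ + 1))) :=
        ENNReal.toReal_le_of_le_ofReal (by positivity) (A.vol_badT_succ hε hα hτ1)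
      have hP : (A.vol (bp (τ + 1) ∩ (A.badT τ)ᶜ)).toReal
          ≤ 2 * (α / (4 * 2 ^ (τ + 1))) := by
        simp only [hbp]
        by_cases h : t₀ ≤ τ + 1
        · rw [if_pos h]
          exact ENNReal.toReal_le_of_le_ofReal (by positivity)
            (A.vol_badP_succ hε hα hτ1 (hq (τ + 1) h))
        · rw [if_neg h]
          simp
          positivity
      have hmono : (A.vol (D (τ + 1))).toReal
          ≤ (A.vol (D τ ∪ ((A.badT (τ + 1) ∩ (A.badT τ)ᶜ)
            ∪ (bp (τ + 1) ∩ (A.badT τ)ᶜ)))).toReal :=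
        ENNReal.toReal_mono (measure_ne_top _ _) (measure_mono hsub)
      have hkey : α * (1 - (1 / 2) ^ τ) + α * ((1 / 2) ^ (τ + 1))
          = α * (1 - (1 / 2) ^ (τ + 1)) := by
        rw [pow_succ]
        ring
      have hc2 : 2 * (α / (4 * (2:ℝ) ^ (τ + 1))) + 2 * (α / (4 * (2:ℝ) ^ (τ + 1)))
          = α * ((1 / 2) ^ (τ + 1)) := by
        rw [div_pow, one_pow]
        have h2 : ((2:ℝ)) ^ (τ + 1) ≠ 0 := by positivity
        field_simp
        ring
      calc (A.vol (D (τ + 1))).toReal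
          ≤ (A.vol (D τ ∪ ((A.badT (τ + 1) ∩ (A.badT τ)ᶜ)
            ∪ (bp (τ + 1) ∩ (A.badT τ)ᶜ)))).toReal := hmono
        _ ≤ (A.vol (D τ)).toReal + (A.vol ((A.badT (τ + 1) ∩ (A.badT τ)ᶜ)
            ∪ (bp (τ + 1) ∩ (A.badT τ)ᶜ))).toReal := hUnion _ _
        _ ≤ (A.vol (D τ)).toReal + ((A.vol (A.badT (τ + 1) ∩ (A.badT τ)ᶜ)).toReal
            + (A.vol (bp (τ + 1) ∩ (A.badT τ)ᶜ)).toReal) := by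
              have := hUnion (A.badT (τ + 1) ∩ (A.badT τ)ᶜ) (bp (τ + 1) ∩ (A.badT τ)ᶜ)
              linarith
        _ ≤ α * (1 - (1 / 2) ^ τ) + (2 * (α / (4 * 2 ^ (τ + 1)))
            + 2 * (α / (4 * 2 ^ (τ + 1)))) := by
              have := add_le_add hT hP
              linarith
        _ = α * (1 - (1 / 2) ^ (τ + 1)) := by rw [hc2, hkey]
  -- identify the good event with the complement of D t
  have hset : {ω |
      (∀ k, t₀ ≤ k → k ≤ t →
        1 - A.phat k ω ∈ Set.Icc ((1 - ε) * (1 - C.tailP i (2 ^ k)))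
          ((1 + ε) * (1 - C.tailP i (2 ^ k)))) ∧
      (∀ k, 1 ≤ k → k ≤ t →
        A.That k ω ∈ Set.Icc ((1 - ε) * C.EThat i (2 ^ k))
          ((1 + ε) * C.EThat i (2 ^ k)))} = (D t)ᶜ := by
    ext ω
    constructor
    · rintro ⟨hP, hQ⟩ hωD
      rw [hD] at hωD
      obtain ⟨k, hk, hmem⟩ := Set.mem_iUnion₂.mp hωD
      have hk' := Finset.mem_Icc.mp hk
      rcases hmem with hT | hB
      · exact hT (hQ k hk'.1 hk'.2)
      · simp only [hbp] at hB
        by_cases h : t₀ ≤ k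
        · rw [if_pos h] at hB
          exact hB (hP k h hk'.2)
        · rw [if_neg h] at hB
          exact hB
    · intro hω
      have hnot : ∀ k, k ∈ Finset.Icc 1 t → ω ∉ A.badT k ∪ bp k := by
        intro k hk hmem
        exact hω (by rw [hD]; exact Set.mem_iUnion₂.mpr ⟨k, hk, hmem⟩)
      constructor
      · intro k hk1 hk2
        by_contra hc
        refine hnot k (Finset.mem_Icc.mpr ⟨le_trans ht₀ hk1, hk2⟩) (Or.inr ?_)
        simp only [hbp, if_pos hk1]
        exact hc
      · intro k hk1 hk2
        by_contra hc
        exact hnot k (Finset.mem_Icc.mpr ⟨hk1, hk2⟩) (Or.inl hc)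
  rw [hset]
  have hce : A.vol ((D t)ᶜ) = 1 - A.vol (D t) := by
    rw [measure_compl (hD_meas t) (measure_ne_top _ _), measure_univ]
  rw [hce, ENNReal.toReal_sub_of_le prob_le_one ENNReal.one_ne_top, ENNReal.toReal_one]
  have hbound := hind t (le_trans ht₀ ht)
  have hfin : α * (1 - (1 / 2) ^ t) ≤ α := by
    have : (0:ℝ) ≤ (1 / 2) ^ t := by positivity
    nlinarith
  linarith

end

end LocalStationary
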